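/- Let n ≥ 3 and φ : ℝ → ℝ. Let g : ℝ → Matrix (Fin n) (Fin n) ℝ be a differentiable family with g'(t) = φ(t) • g(t), let T : ℝ → (Fin n → Fin n → Fin n → Fin n → ℝ) be a differentiable family with (d/dt) T(t) i j k l = φ(t) * T(t) i j k l, let r : Matrix (Fin n) (Fin n) ℝ be a fixed (time-independent) matrix, and let Sc : ℝ → ℝ be differentiable with Sc'(t) = -φ(t) * Sc(t). Define the Weyl tensor W(t) i j k l = T(t) i j k l - (1/(n-2)) * (g(t) j k * r i l - g(t) i k * r j l + g(t) i l * r j k - g(t) j l * r i k) + (Sc(t)/((n-1)*(n-2))) * (g(t) i l * g(t) j k - g(t) j l * g(t) i k). Then for all indices, t ↦ W(t) i j k l is differentiable with (d/dt) W(t) i j k l = φ(t) * W(t) i j k l. -/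
import Mathlib


/-- Component form of Theorem 3.7: the Weyl curvature tensor
`W_{ijkl} = R_{ijkl} - (1/(n-2))(g_{jk}r_{il} - g_{ik}r_{jl} + g_{il}r_{jk} - g_{jl}r_{ik})
  + (R/((n-1)(n-2)))(g_{il}g_{jk} - g_{jl}g_{ik})`
evolves under the Yamabe flow by `∂W_{ijkl}/∂t = φ W_{ijkl}`. -/
theorem yamabe_weyl_evolution
    (n : ℕ) (hn : 3 ≤ n) (φ : ℝ → ℝ)
    (g : ℝ → Matrix (Fin n) (Fin n) ℝ)
    (T : ℝ → Fin n → Fin n → Fin n → Fin n → ℝ)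
    (r : Matrix (Fin n) (Fin n) ℝ)
    (Sc : ℝ → ℝ)
    (hg : ∀ i j, Differentiable ℝ fun t => g t i j)
    (hg' : ∀ t i j, deriv (fun s => g s i j) t = φ t * g t i j)
    (hT : ∀ i j k l, Differentiable ℝ fun t => T t i j k l)
    (hT' : ∀ t i j k l, deriv (fun s => T s i j k l) t = φ t * T t i j k l)
    (hSc : Differentiable ℝ Sc)
    (hSc' : ∀ t, deriv Sc t = -φ t * Sc t) :
    ∀ i j k l : Fin n,
      (Differentiable ℝ fun t =>
          T t i j k l - (1 / ((n : ℝ) - 2))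
              * (g t j k * r i l - g t i k * r j l + g t i l * r j k - g t j l * r i k)
            + (Sc t / (((n : ℝ) - 1) * ((n : ℝ) - 2)))
              * (g t i l * g t j k - g t j l * g t i k)) ∧
        ∀ t, deriv (fun s =>
            T s i j k l - (1 / ((n : ℝ) - 2))
                * (g s j k * r i l - g s i k * r j l + g s i l * r j k - g s j l * r i k)
              + (Sc s / (((n : ℝ) - 1) * ((n : ℝ) - 2)))
                * (g s i l * g s j k - g s j l * g s i k)) t
          = φ t * (T t i j k l - (1 / ((n : ℝ) - 2))
                * (g t j k * r i l - g t i k * r j l + g t i l * r j k - g t j l * r i k)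
              + (Sc t / (((n : ℝ) - 1) * ((n : ℝ) - 2)))
                * (g t i l * g t j k - g t j l * g t i k)) := by
  intro i j k l
  have hdiff : Differentiable ℝ fun t =>
      T t i j k l - (1 / ((n : ℝ) - 2))
          * (g t j k * r i l - g t i k * r j l + g t i l * r j k - g t j l * r i k)
        + (Sc t / (((n : ℝ) - 1) * ((n : ℝ) - 2)))
          * (g t i l * g t j k - g t j l * g t i k) := by
    apply Differentiable.add
    · exact (hT i j k l).sub (Differentiable.const_mul
        (((((hg j k).mul_const _).sub ((hg i k).mul_const _)).add
          ((hg i l).mul_const _)).sub ((hg j l).mul_const _)) _)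
    · exact (hSc.div_const _).mul
        (((hg i l).mul (hg j k)).sub ((hg j l).mul (hg i k)))
  refine ⟨hdiff, fun t => ?_⟩
  have hgd : ∀ i j, HasDerivAt (fun s => g s i j) (φ t * g t i j) t := fun i j => by
    rw [← hg' t i j]; exact ((hg i j) t).hasDerivAt
  have hTd : HasDerivAt (fun s => T s i j k l) (φ t * T t i j k l) t := by
    rw [← hT' t i j k l]; exact ((hT i j k l) t).hasDerivAt
  have hScd : HasDerivAt Sc (-φ t * Sc t) t := by
    rw [← hSc' t]; exact (hSc t).hasDerivAt
  have H : HasDerivAt (fun s =>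
      T s i j k l - (1 / ((n : ℝ) - 2))
          * (g s j k * r i l - g s i k * r j l + g s i l * r j k - g s j l * r i k)
        + (Sc s / (((n : ℝ) - 1) * ((n : ℝ) - 2)))
          * (g s i l * g s j k - g s j l * g s i k))
      ((φ t * T t i j k l - (1 / ((n : ℝ) - 2))
          * (φ t * g t j k * r i l - φ t * g t i k * r j l
            + φ t * g t i l * r j k - φ t * g t j l * r i k))
        + ((-φ t * Sc t / (((n : ℝ) - 1) * ((n : ℝ) - 2)))
            * (g t i l * g t j k - g t j l * g t i k)
          + (Sc t / (((n : ℝ) - 1) * ((n : ℝ) - 2)))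
            * ((φ t * g t i l * g t j k + g t i l * (φ t * g t j k))
              - (φ t * g t j l * g t i k + g t j l * (φ t * g t i k))))) t := by
    exact (hTd.sub (HasDerivAt.const_mul _
        (((((hgd j k).mul_const _).sub ((hgd i k).mul_const _)).add
          ((hgd i l).mul_const _)).sub ((hgd j l).mul_const _)))).add
      ((hScd.div_const _).mul (((hgd i l).mul (hgd j k)).sub ((hgd j l).mul (hgd i k))))
  rw [H.deriv]
  ring
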